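/- Let R be a commutative ring, let P, h be elements of R, let r, n, d be natural numbers with r ≤ n + 1, and let l : Fin r → ℕ with each l_j ≥ 1. For each natural number d set A(d) = ∏_{j=1}^{r} ∏_{m=0}^{d·l_j} (l_j·P + m·h) in R, where natural numbers act through the canonical map ℕ → R. Then for every d ≥ 0: (P + (d+1)·h)^{n+1-r} · A(d+1) = (∏_{j=1}^{r} l_j) · (P + (d+1)·h)^{n+1} · (∏_{j=1}^{r} ∏_{m=1}^{l_j - 1} (l_j·(P + d·h) + m·h)) · A(d). -/

import Mathlib

open Finset

/-- Givental's coefficient identity behind the Picard-Fuchs equation for the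
hypergeometric series of a complete intersection of multidegree `(l 1, …, l r)` in `ℙⁿ`. -/
theorem givental_coefficient_identity
    (R : Type*) [CommRing R] (P h : R) (r n d : ℕ) (hrn : r ≤ n + 1)
    (l : Fin r → ℕ) (hl : ∀ j, 1 ≤ l j)
    (A : ℕ → R)
    (hA : ∀ e : ℕ, A e =
      ∏ j : Fin r, ∏ m ∈ Finset.range (e * l j + 1), ((l j : R) * P + (m : R) * h)) :
    (P + ((d + 1 : ℕ) : R) * h) ^ (n + 1 - r) * A (d + 1) =
      (∏ j : Fin r, (l j : R)) * (P + ((d + 1 : ℕ) : R) * h) ^ (n + 1) *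
        (∏ j : Fin r, ∏ m ∈ Finset.Icc 1 (l j - 1),
          ((l j : R) * (P + (d : R) * h) + (m : R) * h)) *
        A d := by
  have key : ∀ j : Fin r,
      ∏ m ∈ Finset.range ((d + 1) * l j + 1), ((l j : R) * P + (m : R) * h)
        = ((l j : R) * (P + ((d + 1 : ℕ) : R) * h) *
            ∏ m ∈ Finset.Icc 1 (l j - 1), ((l j : R) * (P + (d : R) * h) + (m : R) * h)) *
          ∏ m ∈ Finset.range (d * l j + 1), ((l j : R) * P + (m : R) * h) := by
    intro j
    obtain ⟨t, ht⟩ : ∃ t, l j = t + 1 := ⟨l j - 1, (Nat.succ_pred_eq_of_pos (hl j)).symm⟩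
    have h1 : (d + 1) * (t + 1) + 1 = (d * (t + 1) + 1) + (t + 1) := by ring
    rw [ht, h1, Finset.prod_range_add, Nat.add_sub_cancel,
      Finset.prod_range_succ (fun x => ((t + 1 : ℕ) : R) * P + ((d * (t + 1) + 1 + x : ℕ) : R) * h) t]
    have hB : ∏ x ∈ Finset.range t,
        (((t + 1 : ℕ) : R) * P + ((d * (t + 1) + 1 + x : ℕ) : R) * h)
        = ∏ m ∈ Finset.Icc 1 t, (((t + 1 : ℕ) : R) * (P + (d : R) * h) + (m : R) * h) := by
      rw [← Finset.Ico_add_one_right_eq_Icc, Finset.prod_Ico_eq_prod_range, Nat.add_sub_cancel]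
      apply Finset.prod_congr rfl
      intro k _
      push_cast
      ring
    have ha : ((t + 1 : ℕ) : R) * P + ((d * (t + 1) + 1 + t : ℕ) : R) * h
        = ((t + 1 : ℕ) : R) * (P + ((d + 1 : ℕ) : R) * h) := by
      push_cast
      ring
    rw [hB, ha]
    ring
  have hpow : (P + ((d + 1 : ℕ) : R) * h) ^ (n + 1 - r) *
      (P + ((d + 1 : ℕ) : R) * h) ^ r = (P + ((d + 1 : ℕ) : R) * h) ^ (n + 1) := by
    rw [← pow_add, Nat.sub_add_cancel hrn]
  rw [hA (d + 1), hA d]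
  simp only [key]
  rw [Finset.prod_mul_distrib, Finset.prod_mul_distrib, Finset.prod_mul_distrib,
    Finset.prod_const, Finset.card_univ, Fintype.card_fin, ← hpow]
  ring
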